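/- For the QBF-to-hybrid reduction f mapping a quantified Boolean formula ψ (in which negations occur only in front of variables) to the monotone hybrid formula f(ψ) = ↓r.◇↓s.◇h(ψ), where h(∃x_k.χ) = @_r ◇ ↓x_k. h(χ), h(∀x_k.χ) = @_r □ ↓x_k. h(χ), h(χ₁∧χ₂) = h(χ₁)∧h(χ₂), h(χ₁∨χ₂) = h(χ₁)∨h(χ₂), h(x_k) = @_s x_k, and h(¬x_k) = @_s ◇ x_k: a closed quantified Boolean formula ψ is true if and only if f(ψ) is satisfiable over the frame (ℕ,<). -/
import Mathlib


/-- Quantified Boolean formulas in which negation occurs only in front of variables. -/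
inductive QBF : Type
  | pos : ℕ → QBF
  | neg : ℕ → QBF
  | conj : QBF → QBF → QBF
  | disj : QBF → QBF → QBF
  | ex : ℕ → QBF → QBF
  | all : ℕ → QBF → QBF

/-- Standard QBF semantics under a Boolean assignment β. -/
def qeval (β : ℕ → Bool) : QBF → Prop
  | .pos x => β x = true
  | .neg x => β x = false
  | .conj a b => qeval β a ∧ qeval β b
  | .disj a b => qeval β a ∨ qeval β b
  | .ex x a => ∃ c : Bool, qeval (Function.update β x c) a
  | .all x a => ∀ c : Bool, qeval (Function.update β x c) a

/-- Free variables of a QBF. -/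
def qfree : QBF → Finset ℕ
  | .pos x => {x}
  | .neg x => {x}
  | .conj a b => qfree a ∪ qfree b
  | .disj a b => qfree a ∪ qfree b
  | .ex x a => (qfree a).erase x
  | .all x a => (qfree a).erase x

/-- Monotone hybrid formulas MHL(◇,□,↓,@) over state variables. -/
inductive HForm : Type
  | svar : ℕ → HForm
  | conj : HForm → HForm → HForm
  | disj : HForm → HForm → HForm
  | dia : HForm → HForm
  | box : HForm → HForm
  | bind : ℕ → HForm → HForm
  | at_ : ℕ → HForm → HForm

/-- Hybrid satisfaction over (ℕ,<). -/
def sat (g : ℕ → ℕ) (n : ℕ) : HForm → Prop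
  | .svar x => g x = n
  | .conj a b => sat g n a ∧ sat g n b
  | .disj a b => sat g n a ∨ sat g n b
  | .dia a => ∃ m > n, sat g m a
  | .box a => ∀ m > n, sat g m a
  | .bind x a => sat (Function.update g x n) n a
  | .at_ x a => sat g (g x) a

/-- State-variable encoding: r ↦ 0, s ↦ 1, QBF variable x_k ↦ k + 2.
The inner translation h. -/
def h : QBF → HForm
  | .pos x => .at_ 1 (.svar (x + 2))
  | .neg x => .at_ 1 (.dia (.svar (x + 2)))
  | .conj a b => .conj (h a) (h b)
  | .disj a b => .disj (h a) (h b)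
  | .ex x a => .at_ 0 (.dia (.bind (x + 2) (h a)))
  | .all x a => .at_ 0 (.box (.bind (x + 2) (h a)))

/-- The reduction f(ψ) = ↓r.◇↓s.◇h(ψ). -/
def f (ψ : QBF) : HForm := .bind 0 (.dia (.bind 1 (.dia (h ψ))))


lemma qeval_congr (psi : QBF) : ∀ β β' : ℕ → Bool, (∀ x ∈ qfree psi, β x = β' x) →
    (qeval β psi ↔ qeval β' psi) := by
  induction psi with
  | pos x => intro β β' hβ; simp [qeval, hβ x (by simp [qfree])]
  | neg x => intro β β' hβ; simp [qeval, hβ x (by simp [qfree])]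
  | conj a b iha ihb =>
    intro β β' hβ
    exact and_congr (iha _ _ fun x hx => hβ x (by simp [qfree, hx]))
      (ihb _ _ fun x hx => hβ x (by simp [qfree, hx]))
  | disj a b iha ihb =>
    intro β β' hβ
    exact or_congr (iha _ _ fun x hx => hβ x (by simp [qfree, hx]))
      (ihb _ _ fun x hx => hβ x (by simp [qfree, hx]))
  | ex x a ih =>
    intro β β' hβ
    apply exists_congr; intro c
    apply ih
    intro y hy
    by_cases hxy : y = x
    · subst hxy; simp
    · simp [Function.update_of_ne hxy]
      exact hβ y (by simp [qfree, Finset.mem_erase, hxy, hy])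
  | all x a ih =>
    intro β β' hβ
    apply forall_congr'; intro c
    apply ih
    intro y hy
    by_cases hxy : y = x
    · subst hxy; simp
    · simp [Function.update_of_ne hxy]
      exact hβ y (by simp [qfree, Finset.mem_erase, hxy, hy])

lemma h_sound (χ : QBF) : ∀ (β : ℕ → Bool) (g : ℕ → ℕ) (p : ℕ),
    g 0 = 0 → g 1 = 1 →
    (∀ x ∈ qfree χ, (β x = true → g (x + 2) = 1) ∧ (β x = false → g (x + 2) > 1)) →
    qeval β χ → sat g p (h χ) := by
  induction χ with
  | pos x =>
    intro β g p h0 h1 hc hq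
    simp only [qeval] at hq
    simp only [h, sat, h1]
    exact (hc x (by simp [qfree])).1 hq
  | neg x =>
    intro β g p h0 h1 hc hq
    simp only [qeval] at hq
    simp only [h, sat, h1]
    exact ⟨g (x + 2), (hc x (by simp [qfree])).2 hq, rfl⟩
  | conj a b iha ihb =>
    intro β g p h0 h1 hc hq
    exact ⟨iha β g p h0 h1 (fun x hx => hc x (by simp [qfree, hx])) hq.1,
      ihb β g p h0 h1 (fun x hx => hc x (by simp [qfree, hx])) hq.2⟩
  | disj a b iha ihb =>
    intro β g p h0 h1 hc hq
    cases hq with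
    | inl hq => exact Or.inl (iha β g p h0 h1 (fun x hx => hc x (by simp [qfree, hx])) hq)
    | inr hq => exact Or.inr (ihb β g p h0 h1 (fun x hx => hc x (by simp [qfree, hx])) hq)
  | ex x a ih =>
    intro β g p h0 h1 hc hq
    obtain ⟨c, hq⟩ := hq
    simp only [h, sat, h0]
    refine ⟨if c then 1 else 2, by cases c <;> simp, ?_⟩
    apply ih (Function.update β x c)
    · simp [Function.update_of_ne (by omega : (0:ℕ) ≠ x + 2), h0]
    · simp [Function.update_of_ne (by omega : (1:ℕ) ≠ x + 2), h1]
    · intro y hy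
      by_cases hxy : y = x
      · subst hxy; simp; cases c <;> simp
      · have : y + 2 ≠ x + 2 := by omega
        simp [Function.update_of_ne this, Function.update_of_ne hxy]
        exact hc y (by simp [qfree, Finset.mem_erase, hxy, hy])
    · exact hq
  | all x a ih =>
    intro β g p h0 h1 hc hq
    simp only [h, sat, h0]
    intro q hq'
    apply ih (Function.update β x (decide (q = 1)))
    · simp [Function.update_of_ne (by omega : (0:ℕ) ≠ x + 2), h0]
    · simp [Function.update_of_ne (by omega : (1:ℕ) ≠ x + 2), h1]
    · intro y hy
      by_cases hxy : y = x
      · subst hxy; simp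
        omega
      · have : y + 2 ≠ x + 2 := by omega
        simp [Function.update_of_ne this, Function.update_of_ne hxy]
        exact hc y (by simp [qfree, Finset.mem_erase, hxy, hy])
    · exact hq (decide (q = 1))

lemma h_complete (χ : QBF) : ∀ (g : ℕ → ℕ) (p : ℕ), g 0 < g 1 → sat g p (h χ) →
    qeval (fun x => decide (g (x + 2) = g 1)) χ := by
  induction χ with
  | pos x =>
    intro g p h01 hs
    simp only [h, sat] at hs
    simp [qeval, hs]
  | neg x =>
    intro g p h01 hs
    simp only [h, sat] at hs
    obtain ⟨m, hm, hm'⟩ := hs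
    simp only [qeval]
    simp; omega
  | conj a b iha ihb =>
    intro g p h01 hs
    exact ⟨iha g p h01 hs.1, ihb g p h01 hs.2⟩
  | disj a b iha ihb =>
    intro g p h01 hs
    cases hs with
    | inl hs => exact Or.inl (iha g p h01 hs)
    | inr hs => exact Or.inr (ihb g p h01 hs)
  | ex x a ih =>
    intro g p h01 hs
    simp only [h, sat] at hs
    obtain ⟨q, hq, hs⟩ := hs
    set g' := Function.update g (x + 2) q with hg'
    have e0 : g' 0 = g 0 := Function.update_of_ne (by omega) _ _
    have e1 : g' 1 = g 1 := Function.update_of_ne (by omega) _ _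
    have hq' := ih g' q (by rw [e0, e1]; exact h01) hs
    refine ⟨decide (q = g 1), ?_⟩
    have : Function.update (fun x => decide (g (x + 2) = g 1)) x (decide (q = g 1)) =
        fun y => decide (g' (y + 2) = g' 1) := by
      funext y
      by_cases hxy : y = x
      · subst hxy; simp [hg', e1]
      · have : y + 2 ≠ x + 2 := by omega
        simp [Function.update_of_ne hxy, hg', Function.update_of_ne this, e1]
    rw [this]; exact hq'
  | all x a ih =>
    intro g p h01 hs
    simp only [h, sat] at hs
    intro c
    set q := if c then g 1 else g 1 + 1 with hqdef
    have hq : q > g 0 := by cases c <;> simp [hqdef] <;> omega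
    have hs' := hs q hq
    set g' := Function.update g (x + 2) q with hg'
    have e0 : g' 0 = g 0 := Function.update_of_ne (by omega) _ _
    have e1 : g' 1 = g 1 := Function.update_of_ne (by omega) _ _
    have hq' := ih g' q (by rw [e0, e1]; exact h01) hs'
    have : Function.update (fun x => decide (g (x + 2) = g 1)) x c =
        fun y => decide (g' (y + 2) = g' 1) := by
      funext y
      by_cases hxy : y = x
      · subst hxy; cases c
        · simp [hg', e1, hqdef]
        · simp [hg', e1, hqdef]
      · have : y + 2 ≠ x + 2 := by omega
        simp [Function.update_of_ne hxy, hg', Function.update_of_ne this, e1]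
    rw [this]; exact hq'

/-- A closed QBF ψ is true iff f(ψ) is satisfiable over the frame (ℕ,<). -/
theorem stmt11 (ψ : QBF) (hclosed : qfree ψ = ∅) :
    (∀ β : ℕ → Bool, qeval β ψ) ↔ ∃ (g : ℕ → ℕ) (n : ℕ), sat g n (f ψ) := by
  constructor
  · intro hq
    refine ⟨fun k => if k = 0 then 0 else if k = 1 then 1 else 2, 0, ?_⟩
    simp only [f, sat]
    refine ⟨1, by omega, ?_⟩
    refine ⟨2, by omega, ?_⟩
    set g1 : ℕ → ℕ := Function.update (Function.update
      (fun k => if k = 0 then 0 else if k = 1 then 1 else 2) 0 0) 1 1 with hg1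
    apply h_sound ψ (fun _ => false) g1 2
    · simp [hg1, Function.update]
    · simp [hg1, Function.update]
    · intro x hx
      constructor
      · intro hc; simp at hc
      · intro _
        have h2 : g1 (x + 2) = 2 := by
          simp [hg1, Function.update_of_ne (by omega : x + 2 ≠ 1),
            Function.update_of_ne (by omega : x + 2 ≠ 0)]
        omega
    · exact hq _
  · rintro ⟨g, n, hs⟩ β
    simp only [f, sat] at hs
    obtain ⟨m, hm, p, hp, hs⟩ := hs
    set g1 := Function.update (Function.update g 0 n) 1 m with hg1
    have e0 : g1 0 = n := by simp [hg1, Function.update_of_ne (by omega : (0:ℕ) ≠ 1)]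
    have e1 : g1 1 = m := by simp [hg1]
    have := h_complete ψ g1 p (by omega) hs
    exact (qeval_congr ψ β _ (by simp [hclosed])).mpr this
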